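/- Let p be an odd prime with (2/p) = -1, and let q = p^n. Then the number of triples (a,b,c) in F_q^3 with c^3 - a*b*c^2 + (a^2+b^2-2)*c - a*b = 0 equals q^2 + 4q + 2 if n is even, and q^2 + 2q + 2 if n is odd. -/

import Mathlib

set_option linter.unusedSectionVars false
open Finset

lemma card_filter_equiv' {α β : Type} [Fintype α] [Fintype β]
    (e : α ≃ β) (P : β → Prop) [DecidablePred P] :
    (univ.filter fun x => P (e x)).card = (univ.filter P).card := by
  classical
  rw [← Fintype.card_subtype, ← Fintype.card_subtype]
  exact Fintype.card_congr (e.subtypeEquiv fun a => Iff.rfl)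

variable {F : Type} [Field F] [Fintype F] [DecidableEq F]

lemma card_hyperbola (d : F) (hd : d ≠ 0) :
    (univ.filter fun uv : F × F => uv.1 * uv.2 = d).card = Fintype.card F - 1 := by
  have h : (univ.filter fun uv : F × F => uv.1 * uv.2 = d)
      = (univ.erase (0:F)).image (fun u => (u, u⁻¹ * d)) := by
    ext ⟨u, v⟩
    simp only [mem_filter, mem_univ, true_and, mem_image, mem_erase, Prod.mk.injEq]
    constructor
    · intro h
      have hu : u ≠ 0 := by rintro rfl; rw [zero_mul] at h; exact hd h.symm
      exact ⟨u, ⟨hu, trivial⟩, rfl, by field_simp [← h]; exact h.symm⟩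
    · rintro ⟨x, ⟨hx, -⟩, rfl, rfl⟩
      field_simp
  rw [h, Finset.card_image_of_injective _ (fun a b hab => congrArg Prod.fst hab),
    Finset.card_erase_of_mem (mem_univ 0), card_univ]

lemma card_hyperbola0 :
    (univ.filter fun uv : F × F => uv.1 * uv.2 = 0).card = 2 * Fintype.card F - 1 := by
  have h : (univ.filter fun uv : F × F => uv.1 * uv.2 = 0)
      = (({0} : Finset F) ×ˢ univ) ∪ ((univ : Finset F) ×ˢ {0}) := by
    ext ⟨u, v⟩
    simp [mem_product, mul_eq_zero, eq_comm]
  have hinter : ((({0} : Finset F) ×ˢ univ) ∩ ((univ : Finset F) ×ˢ {0})) = {((0:F), (0:F))} := by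
    ext ⟨u, v⟩
    simp [mem_product, Prod.ext_iff, eq_comm]
  have := Finset.card_union_add_card_inter (({0} : Finset F) ×ˢ (univ : Finset F))
      ((univ : Finset F) ×ˢ {0})
  rw [hinter] at this
  simp only [card_product, card_singleton, one_mul, mul_one, card_univ] at this
  have hq : 1 ≤ Fintype.card F := Fintype.card_pos
  rw [h]
  omega

lemma card_sq_eq (h2 : (2:F) ≠ 0) (r : F) (hr : r ≠ 0) :
    (univ.filter fun t : F => t ^ 2 = r ^ 2).card = 2 := by
  have key : (univ.filter fun t : F => t ^ 2 = r ^ 2) = {r, -r} := by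
    ext t
    simp only [mem_filter, mem_univ, true_and, mem_insert, mem_singleton]
    constructor
    · intro h
      have : (t - r) * (t + r) = 0 := by linear_combination h
      rcases mul_eq_zero.1 this with h' | h'
      · left; exact sub_eq_zero.1 h'
      · right; exact eq_neg_of_add_eq_zero_left h'
    · rintro (rfl | rfl) <;> ring
  rw [key, card_insert_of_notMem, card_singleton]
  simp only [mem_singleton]
  intro h
  apply hr
  have : 2 * r = 0 := by linear_combination h
  rcases mul_eq_zero.1 this with h' | h'
  · exact absurd h' h2
  · exact h'

lemma card_sq_one' (h2 : (2:F) ≠ 0) :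
    (univ.filter fun t : F => t ^ 2 = 1).card = 2 := by
  have := card_sq_eq h2 (1 : F) one_ne_zero
  simpa using this

lemma card_fst_filter (P : F → Prop) [DecidablePred P] :
    (univ.filter fun tb : F × F => P tb.1).card = (univ.filter P).card * Fintype.card F := by
  have h : (univ.filter fun tb : F × F => P tb.1) = (univ.filter P) ×ˢ univ := by
    ext ⟨t, b⟩; simp [mem_product]
  rw [h, card_product, card_univ]

lemma card_prod_fiber {α β : Type} [Fintype α] [Fintype β] [DecidableEq α] [DecidableEq β]
    (S : α → β → Prop) [∀ a b, Decidable (S a b)] :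
    (univ.filter fun w : β × α => S w.2 w.1).card
      = ∑ c : α, (univ.filter fun b => S c b).card := by
  rw [Finset.card_eq_sum_card_fiberwise (f := Prod.snd) (t := univ) (fun x _ => mem_univ _)]
  refine sum_congr rfl fun c _ => ?_
  rw [filter_filter]
  have h : (univ.filter fun w : β × α => S w.2 w.1 ∧ w.2 = c)
      = (univ.filter fun b => S c b) ×ˢ {c} := by
    ext ⟨b, a⟩
    simp only [mem_filter, mem_univ, true_and, mem_product, mem_singleton]
    constructor
    · rintro ⟨h1, rfl⟩; exact ⟨h1, rfl⟩
    · rintro ⟨h1, rfl⟩; exact ⟨h1, rfl⟩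
  rw [h, card_product, card_singleton, mul_one]


def shearEquiv (s : F) : F × F ≃ F × F where
  toFun tb := (tb.1 + s * tb.2, tb.2)
  invFun ab := (ab.1 - s * ab.2, ab.2)
  left_inv tb := by ext <;> simp
  right_inv ab := by ext <;> simp

def mixEquiv (c : F) (hk : c ^ 2 - 1 ≠ 0) : F × F ≃ F × F where
  toFun ab := (c * ab.1 - ab.2, ab.1 - c * ab.2)
  invFun uv := ((c * uv.1 - uv.2) / (c ^ 2 - 1), (uv.1 - c * uv.2) / (c ^ 2 - 1))
  left_inv ab := by ext <;> field_simp <;> ring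
  right_inv uv := by ext <;> field_simp <;> ring

lemma Ncount (h2 : (2:F) ≠ 0) (c : F) :
    (univ.filter fun ab : F × F => (c*ab.1 - ab.2) * (ab.1 - c*ab.2) = 2*c - c^3).card
      = if c ^ 2 = 1 then 2 * Fintype.card F
        else if 2*c - c^3 = 0 then 2 * Fintype.card F - 1 else Fintype.card F - 1 := by
  by_cases hc : c ^ 2 = 1
  · rw [if_pos hc]
    have hc' : c = 1 ∨ c = -1 := by
      have : (c - 1) * (c + 1) = 0 := by linear_combination hc
      rcases mul_eq_zero.1 this with h' | h'
      · left; exact sub_eq_zero.1 h'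
      · right; exact eq_neg_of_add_eq_zero_left h'
    rcases hc' with rfl | rfl
    · have key := card_filter_equiv' (shearEquiv (1:F))
        (fun ab : F × F => ((1:F)*ab.1 - ab.2) * (ab.1 - 1*ab.2) = 2*1 - 1^3)
      simp only [shearEquiv, Equiv.coe_fn_mk] at key
      rw [← key]
      have heq : ∀ tb : F × F,
          ((1:F)*(tb.1 + 1*tb.2) - tb.2) * ((tb.1 + 1*tb.2) - 1*tb.2) = 2*1 - 1^3
          ↔ tb.1 ^ 2 = 1 := by
        intro tb; constructor <;> intro h <;> linear_combination h
      refine Eq.trans (congrArg Finset.card (filter_congr (fun x _ => heq x))) ?_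
      rw [card_fst_filter (fun t : F => t ^ 2 = 1), card_sq_one' h2, mul_comm]
    · have key := card_filter_equiv' (shearEquiv (-1:F))
        (fun ab : F × F => ((-1:F)*ab.1 - ab.2) * (ab.1 - (-1)*ab.2) = 2*(-1) - (-1)^3)
      simp only [shearEquiv, Equiv.coe_fn_mk] at key
      rw [← key]
      have heq : ∀ tb : F × F,
          ((-1:F)*(tb.1 + (-1)*tb.2) - tb.2) * ((tb.1 + (-1)*tb.2) - (-1)*tb.2) = 2*(-1) - (-1)^3
          ↔ tb.1 ^ 2 = 1 := by
        intro tb; constructor <;> intro h <;> linear_combination -h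
      refine Eq.trans (congrArg Finset.card (filter_congr (fun x _ => heq x))) ?_
      rw [card_fst_filter (fun t : F => t ^ 2 = 1), card_sq_one' h2, mul_comm]
  · rw [if_neg hc]
    have hk : c ^ 2 - 1 ≠ 0 := sub_ne_zero.2 hc
    have key := card_filter_equiv' (mixEquiv c hk) (fun uv : F × F => uv.1 * uv.2 = 2*c - c^3)
    simp only [mixEquiv, Equiv.coe_fn_mk] at key
    refine key.trans ?_
    by_cases hd : 2*c - c^3 = 0
    · rw [if_pos hd, hd]
      exact card_hyperbola0
    · rw [if_neg hd]
      exact card_hyperbola _ hd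

set_option maxHeartbeats 1000000 in
lemma master (h2 : (2:F) ≠ 0) :
    (univ.filter fun v : F × F × F =>
      v.2.2 ^ 3 - v.1 * v.2.1 * v.2.2 ^ 2 + (v.1 ^ 2 + v.2.1 ^ 2 - 2) * v.2.2
        - v.1 * v.2.1 = 0).card
    = Fintype.card F ^ 2 + 2 * Fintype.card F + 2
      + (univ.filter fun c : F => c ^ 2 = 2).card * Fintype.card F := by
  set s := (univ.filter fun c : F => c ^ 2 = 2).card with hsdef
  -- step 1: factor the cubic
  have h1 : (univ.filter fun v : F × F × F =>
      v.2.2 ^ 3 - v.1 * v.2.1 * v.2.2 ^ 2 + (v.1 ^ 2 + v.2.1 ^ 2 - 2) * v.2.2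
        - v.1 * v.2.1 = 0)
      = (univ.filter fun v : F × F × F =>
      (v.2.2 * v.1 - v.2.1) * (v.1 - v.2.2 * v.2.1) = 2 * v.2.2 - v.2.2 ^ 3) := by
    refine filter_congr fun v _ => ?_
    constructor <;> intro h <;> linear_combination h
  rw [h1]
  -- step 2: reassociate the product
  have key := card_filter_equiv' (Equiv.prodAssoc F F F)
    (fun v : F × F × F => (v.2.2 * v.1 - v.2.1) * (v.1 - v.2.2 * v.2.1) = 2 * v.2.2 - v.2.2 ^ 3)
  simp only [Equiv.prodAssoc_apply] at key
  rw [← key]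
  -- step 3: fiber over the last coordinate
  have step : (univ.filter fun w : (F × F) × F =>
      (w.2 * w.1.1 - w.1.2) * (w.1.1 - w.2 * w.1.2) = 2 * w.2 - w.2 ^ 3).card
      = ∑ c : F, (univ.filter fun ab : F × F =>
          (c * ab.1 - ab.2) * (ab.1 - c * ab.2) = 2 * c - c ^ 3).card :=
    card_prod_fiber (α := F) (β := F × F)
      (fun (c : F) (ab : F × F) => (c * ab.1 - ab.2) * (ab.1 - c * ab.2) = 2 * c - c ^ 3)
  rw [step]
  -- step 4: evaluate each fiber
  rw [Finset.sum_congr rfl fun c _ => Ncount h2 c]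
  -- step 5: compute the sum
  rw [Finset.sum_ite, Finset.sum_ite]
  simp only [Finset.sum_const, smul_eq_mul, filter_filter]
  have hA : (univ.filter fun c : F => c ^ 2 = 1).card = 2 := card_sq_one' h2
  have hAc : (univ.filter fun c : F => ¬c ^ 2 = 1).card = Fintype.card F - 2 := by
    have := Finset.card_filter_add_card_filter_not
      (s := (univ : Finset F)) (p := fun c : F => c ^ 2 = 1)
    rw [hA, card_univ] at this
    omega
  have hBset : (univ.filter fun c : F => ¬c ^ 2 = 1 ∧ 2 * c - c ^ 3 = 0)
      = insert (0:F) (univ.filter fun c : F => c ^ 2 = 2) := by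
    ext c
    simp only [mem_filter, mem_univ, true_and, mem_insert]
    constructor
    · rintro ⟨hne, hz⟩
      have : c * (2 - c ^ 2) = 0 := by linear_combination hz
      rcases mul_eq_zero.1 this with h' | h'
      · exact Or.inl h'
      · exact Or.inr (by linear_combination -h')
    · rintro (rfl | hc2)
      · refine ⟨?_, by ring⟩
        intro h
        exact one_ne_zero (by linear_combination -h)
      · refine ⟨?_, by linear_combination -c * hc2⟩
        intro h
        rw [hc2] at h
        exact h2 (by linear_combination 2 * h)
  have hB : (univ.filter fun c : F => ¬c ^ 2 = 1 ∧ 2 * c - c ^ 3 = 0).card = 1 + s := by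
    rw [hBset, card_insert_of_notMem]
    · omega
    · simp only [mem_filter, mem_univ, true_and]
      intro h
      exact h2 (by linear_combination -h)
  have hC : (univ.filter fun c : F => ¬c ^ 2 = 1 ∧ ¬2 * c - c ^ 3 = 0).card = Fintype.card F - 2 - (1 + s) := by
    have := Finset.card_filter_add_card_filter_not
      (s := (univ.filter fun c : F => ¬c ^ 2 = 1)) (p := fun c : F => 2 * c - c ^ 3 = 0)
    rw [filter_filter, filter_filter, hB, hAc] at this
    omega
  have hle : 1 + s ≤ Fintype.card F - 2 := by
    rw [← hAc, ← hB, ← filter_filter]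
    exact Finset.card_filter_le _ _
  have hq2 : 2 ≤ Fintype.card F := by
    rw [← hA]
    exact Finset.card_filter_le _ _
  rw [hA, hB, hC]
  obtain ⟨m, hm⟩ : ∃ m, Fintype.card F - 2 - (1 + s) = m := ⟨_, rfl⟩
  have hq : Fintype.card F = m + 3 + s := by omega
  rw [hm, hq]
  have e1 : 2 * (m + 3 + s) - 1 = 2 * m + 5 + 2 * s := by omega
  have e2 : m + 3 + s - 1 = m + 2 + s := by omega
  rw [e1, e2]
  ring

lemma pow_mod8_even {p : ℕ} (hp8 : p % 8 = 3 ∨ p % 8 = 5) {n : ℕ} (hn : Even n) :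
    p ^ n % 8 = 1 := by
  obtain ⟨k, rfl⟩ := hn
  have h2 : p ^ 2 % 8 = 1 := by
    rw [Nat.pow_mod]; rcases hp8 with h | h <;> rw [h] <;> rfl
  have : p ^ (k + k) = (p ^ 2) ^ k := by rw [← pow_mul]; ring_nf
  rw [this, Nat.pow_mod, h2, one_pow]
  rfl

lemma pow_mod8_odd {p : ℕ} (hp8 : p % 8 = 3 ∨ p % 8 = 5) {n : ℕ} (hn : ¬ Even n) :
    p ^ n % 8 = p % 8 := by
  obtain ⟨k, rfl⟩ := Nat.odd_iff.2 (Nat.not_even_iff.1 hn)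
  have h2 : p ^ 2 % 8 = 1 := by
    rw [Nat.pow_mod]; rcases hp8 with h | h <;> rw [h] <;> rfl
  have : p ^ (2 * k + 1) = (p ^ 2) ^ k * p := by rw [← pow_mul, ← pow_succ]
  rw [this, Nat.mul_mod, Nat.pow_mod, h2, one_pow]
  omega

theorem stmt_5 (p n : ℕ) [Fact p.Prime] (hodd : p ≠ 2) (hn : 0 < n)
    (hleg : legendreSym p 2 = -1)
    (F : Type) [Field F] [Fintype F] (hF : Fintype.card F = p ^ n) :
    Nat.card {v : F × F × F //
      v.2.2 ^ 3 - v.1 * v.2.1 * v.2.2 ^ 2 + (v.1 ^ 2 + v.2.1 ^ 2 - 2) * v.2.2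
        - v.1 * v.2.1 = 0} =
      if Even n then (p ^ n) ^ 2 + 4 * p ^ n + 2
      else (p ^ n) ^ 2 + 2 * p ^ n + 2 := by
  classical
  have hp : p.Prime := Fact.out
  -- the characteristic is odd
  have hcard_odd : Fintype.card F % 2 = 1 := by
    rw [hF]
    exact Nat.odd_iff.1 ((hp.odd_of_ne_two hodd).pow)
  have hchar2 : ringChar F ≠ 2 := by
    intro h
    have := FiniteField.even_card_of_char_two h
    omega
  have h2 : (2 : F) ≠ 0 := Ring.two_ne_zero hchar2
  -- 2 is not a square mod p
  have hns : ¬ IsSquare (2 : ZMod p) := by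
    have := (legendreSym.eq_neg_one_iff p (a := 2)).1 hleg
    simpa using this
  have hp8 : p % 8 = 3 ∨ p % 8 = 5 := by
    have hiff := FiniteField.isSquare_two_iff (F := ZMod p)
    rw [ZMod.card p] at hiff
    have := mt hiff.2 hns
    omega
  -- 2 is a square in F iff n is even
  have hsqF : IsSquare (2 : F) ↔ Even n := by
    rw [FiniteField.isSquare_two_iff, hF]
    constructor
    · intro h
      by_contra hev
      have := pow_mod8_odd hp8 hev
      omega
    · intro hev
      have := pow_mod8_even hp8 hev
      omega
  -- the count of square roots of 2
  have hs : (Finset.univ.filter fun c : F => c ^ 2 = 2).card = if Even n then 2 else 0 := by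
    by_cases hev : Even n
    · rw [if_pos hev]
      obtain ⟨r, hr⟩ := hsqF.2 hev
      have hr0 : r ≠ 0 := by
        rintro rfl
        exact h2 (by rw [hr]; ring)
      have hre : (Finset.univ.filter fun c : F => c ^ 2 = 2)
          = (Finset.univ.filter fun c : F => c ^ 2 = r ^ 2) := by
        refine Finset.filter_congr fun c _ => ?_
        rw [show r ^ 2 = 2 by rw [hr]; ring]
      rw [hre]
      exact card_sq_eq h2 r hr0
    · rw [if_neg hev]
      rw [Finset.card_eq_zero, Finset.filter_eq_empty_iff]
      intro c _ hc
      exact hev (hsqF.1 ⟨c, by rw [← hc]; ring⟩)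
  have hmain := master (F := F) h2
  rw [Nat.card_eq_fintype_card, Fintype.card_subtype, hmain, hs, hF]
  by_cases hev : Even n
  · rw [if_pos hev, if_pos hev]
    ring
  · rw [if_neg hev, if_neg hev]
    ring
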